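/- If X_{k+1} is independent of (X_1,…,X_k), i.e., the joint copula measure factorizes as μ_{C̃} = μ_C × μ_{C_{k+1}}, then T_{d_1,…,d_{k+1}}(μ_{C̃}; ν_1,…,ν_{k+1}) = T_{d_1,…,d_k}(μ_C; ν_1,…,ν_k); the Wasserstein dependence is unchanged by adding an independent component. -/

import Mathlib

open MeasureTheory
open scoped ENNReal unitInterval

/-- The optimal-transport cost between two measures `μ, ν` on `X` for the cost
function `c` : the infimum, over all couplings `γ` of `μ` and `ν`, of `∫ c dγ`.
For `c u v = ‖u - v‖²` this is the squared 2-Wasserstein distance `W₂²(μ, ν)`. -/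
noncomputable def Wsq {X : Type*} [MeasurableSpace X] (c : X → X → ℝ)
    (μ ν : Measure X) : ℝ≥0∞ :=
  ⨅ (γ : Measure (X × X)) (_ : γ.map Prod.fst = μ ∧ γ.map Prod.snd = ν),
    ∫⁻ p, ENNReal.ofReal (c p.1 p.2) ∂γ

/-- The `i`-th block `[0,1]^{d i}` of the cube `[0,1]^q`, `q = d 0 + ⋯ + d (k-1)`. -/
abbrev Blk {k : ℕ} (d : Fin k → ℕ) (i : Fin k) : Type := Fin (d i) → I

/-- The cube `[0,1]^q` decomposed in `k` blocks of dimensions `d i`. -/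
abbrev Cube {k : ℕ} (d : Fin k → ℕ) : Type := ∀ i, Blk d i

/-- Squared Euclidean cost `‖a - b‖²` on the block `[0,1]^{d i}`. -/
noncomputable def blockCost {k : ℕ} (d : Fin k → ℕ) (i : Fin k) (a b : Blk d i) : ℝ :=
  ∑ j, dist (a j) (b j) ^ 2

/-- Squared Euclidean cost `‖u - v‖²` on the cube `[0,1]^q`. -/
noncomputable def jointCost {k : ℕ} (d : Fin k → ℕ) (u v : Cube d) : ℝ :=
  ∑ i, ∑ j, dist (u i j) (v i j) ^ 2

/-- The marginal of a measure on the cube on the `i`-th coordinate block. -/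
noncomputable def marg {k : ℕ} (d : Fin k → ℕ) (μ : Measure (Cube d)) (i : Fin k) :
    Measure (Blk d i) :=
  μ.map (fun u => u i)

/-- `T_{d₁,…,d_k}(π; ν₁,…,ν_k) = W₂²(π, ν₁ × ⋯ × ν_k) − ∑ i W₂²(π_i, ν_i)`. -/
noncomputable def Tdep {k : ℕ} (d : Fin k → ℕ) (ν : ∀ i, Measure (Blk d i))
    (π : Measure (Cube d)) : ℝ :=
  (Wsq (jointCost d) π (Measure.pi ν)).toReal -
    ∑ i, (Wsq (blockCost d i) (marg d π i) (ν i)).toReal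

/-- The marginal of a measure on a `(k+1)`-block cube on the first `k` blocks. -/
noncomputable def firstMarg {k : ℕ} (d : Fin (k + 1) → ℕ) (μ : Measure (Cube d)) :
    Measure (Cube (fun i : Fin k => d i.castSucc)) :=
  μ.map (fun u => fun i : Fin k => u i.castSucc)

section Aux
open Set

lemma Wsq_le {X : Type*} [MeasurableSpace X] (c : X → X → ℝ) {μ ν : Measure X}
    (γ : Measure (X × X)) (h : γ.map Prod.fst = μ ∧ γ.map Prod.snd = ν) :
    Wsq c μ ν ≤ ∫⁻ p, ENNReal.ofReal (c p.1 p.2) ∂γ :=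
  iInf₂_le γ h

lemma Wsq_ne_top {X : Type*} [MeasurableSpace X] (c : X → X → ℝ) {C : ℝ}
    (hc : ∀ a b, c a b ≤ C) (μ ν : Measure X)
    [IsProbabilityMeasure μ] [IsProbabilityMeasure ν] : Wsq c μ ν ≠ ⊤ := by
  have h1 : Wsq c μ ν ≤ ENNReal.ofReal C := by
    refine (Wsq_le c (μ.prod ν) ⟨by simp, by simp⟩).trans ?_
    calc ∫⁻ p, ENNReal.ofReal (c p.1 p.2) ∂(μ.prod ν)
        ≤ ∫⁻ _, ENNReal.ofReal C ∂(μ.prod ν) :=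
          lintegral_mono fun p => ENNReal.ofReal_le_ofReal (hc _ _)
      _ = ENNReal.ofReal C := by simp
  exact ne_top_of_le_ne_top ENNReal.ofReal_ne_top h1

lemma dist_I_le_one (a b : I) : dist a b ≤ 1 := by
  rw [Subtype.dist_eq, Real.dist_eq]
  have ha1 := a.2.1; have ha2 := a.2.2; have hb1 := b.2.1; have hb2 := b.2.2
  rw [abs_sub_le_iff]; constructor <;> linarith

lemma blockCost_nonneg {k : ℕ} (d : Fin k → ℕ) (i : Fin k) (a b : Blk d i) :
    0 ≤ blockCost d i a b :=
  Finset.sum_nonneg fun _ _ => sq_nonneg _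

lemma blockCost_le {k : ℕ} (d : Fin k → ℕ) (i : Fin k) (a b : Blk d i) :
    blockCost d i a b ≤ (d i : ℝ) := by
  calc blockCost d i a b ≤ ∑ _j : Fin (d i), (1 : ℝ) := by
        refine Finset.sum_le_sum fun j _ => ?_
        have h := dist_I_le_one (a j) (b j)
        have h0 : (0:ℝ) ≤ dist (a j) (b j) := dist_nonneg
        nlinarith
    _ = (d i : ℝ) := by simp

lemma jointCost_nonneg {k : ℕ} (d : Fin k → ℕ) (u v : Cube d) :
    0 ≤ jointCost d u v :=
  Finset.sum_nonneg fun _ _ => Finset.sum_nonneg fun _ _ => sq_nonneg _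

lemma jointCost_le {k : ℕ} (d : Fin k → ℕ) (u v : Cube d) :
    jointCost d u v ≤ ∑ i, (d i : ℝ) :=
  Finset.sum_le_sum fun i _ => blockCost_le d i (u i) (v i)

lemma measurable_blockCost {k : ℕ} (d : Fin k → ℕ) (i : Fin k) :
    Measurable fun p : Blk d i × Blk d i => blockCost d i p.1 p.2 := by
  unfold blockCost
  refine Finset.measurable_sum _ fun j _ => ?_
  exact (((measurable_pi_apply j).comp measurable_fst).dist
    ((measurable_pi_apply j).comp measurable_snd)).pow_const 2

lemma measurable_jointCost {k : ℕ} (d : Fin k → ℕ) :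
    Measurable fun p : Cube d × Cube d => jointCost d p.1 p.2 := by
  unfold jointCost
  refine Finset.measurable_sum _ fun i _ => Finset.measurable_sum _ fun j _ => ?_
  exact (((measurable_pi_apply j).comp ((measurable_pi_apply i).comp measurable_fst)).dist
    ((measurable_pi_apply j).comp ((measurable_pi_apply i).comp measurable_snd))).pow_const 2

lemma jointCost_split {k : ℕ} (d : Fin (k+1) → ℕ) (u v : Cube d) :
    jointCost d u v =
      jointCost (fun i : Fin k => d i.castSucc) (fun i => u i.castSucc) (fun i => v i.castSucc)
        + blockCost d (Fin.last k) (u (Fin.last k)) (v (Fin.last k)) := by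
  simp [jointCost, blockCost, Fin.sum_univ_castSucc]

lemma lintegral_fst_prod {X Y : Type*} [MeasurableSpace X] [MeasurableSpace Y]
    (μ : Measure X) (ν : Measure Y) [SFinite μ] [IsProbabilityMeasure ν]
    {g : X → ℝ≥0∞} (hg : Measurable g) :
    ∫⁻ q, g q.1 ∂(μ.prod ν) = ∫⁻ x, g x ∂μ := by
  rw [← lintegral_map hg measurable_fst, Measure.map_fst_prod, measure_univ, one_smul]

lemma lintegral_snd_prod {X Y : Type*} [MeasurableSpace X] [MeasurableSpace Y]
    (μ : Measure X) (ν : Measure Y) [IsProbabilityMeasure μ] [SFinite ν]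
    {g : Y → ℝ≥0∞} (hg : Measurable g) :
    ∫⁻ q, g q.2 ∂(μ.prod ν) = ∫⁻ y, g y ∂ν := by
  rw [← lintegral_map hg measurable_snd, Measure.map_snd_prod, measure_univ, one_smul]

end Aux

set_option maxHeartbeats 2000000 in
/-- If `X_{k+1}` is independent of `(X_1,…,X_k)`, i.e. the joint measure factorizes as
`μ_C̃ = μ_C × μ_{C_{k+1}}`, then `T_{d₁,…,d_{k+1}}(μ_C̃; ν₁,…,ν_{k+1}) =
T_{d₁,…,d_k}(μ_C; ν₁,…,ν_k)` : the Wasserstein dependence is unchanged by adding an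
independent component. -/
theorem Tdep_of_indep {k : ℕ} (d : Fin (k + 1) → ℕ)
    (μt : Measure (Cube d)) [IsProbabilityMeasure μt]
    (ν : ∀ i, Measure (Blk d i)) [∀ i, IsProbabilityMeasure (ν i)]
    (hind : μt = ((firstMarg d μt).prod (μt.map (fun u => u (Fin.last k)))).map
      (fun p => Fin.snoc p.1 p.2)) :
    Tdep d ν μt =
      Tdep (fun i : Fin k => d i.castSucc) (fun i => ν i.castSucc) (firstMarg d μt) := by
  classical
  have mfirst : Measurable (fun u : Cube d => fun i : Fin k => u i.castSucc) :=
    measurable_pi_lambda _ fun i => measurable_pi_apply _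
  have mlast : Measurable (fun u : Cube d => u (Fin.last k)) := measurable_pi_apply _
  have msnoc : Measurable
      (fun p : Cube (fun i : Fin k => d i.castSucc) × Blk d (Fin.last k) =>
        (Fin.snoc p.1 p.2 : Cube d)) := by
    refine measurable_pi_lambda _ fun i => ?_
    induction i using Fin.lastCases with
    | last => simpa [Fin.snoc_last] using measurable_snd
    | cast j =>
      simp only [Fin.snoc_castSucc]
      exact (measurable_pi_apply j).comp measurable_fst
  haveI hPC : IsProbabilityMeasure (firstMarg d μt) := by
    unfold firstMarg; exact Measure.isProbabilityMeasure_map mfirst.aemeasurable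
  haveI hPL : IsProbabilityMeasure (μt.map (fun u => u (Fin.last k))) :=
    Measure.isProbabilityMeasure_map mlast.aemeasurable
  -- the product measure factorizes
  have hpi : Measure.pi ν =
      ((Measure.pi (fun i : Fin k => ν i.castSucc)).prod (ν (Fin.last k))).map
        (fun p => Fin.snoc p.1 p.2) := by
    refine Measure.pi_eq fun s hs => ?_
    rw [Measure.map_apply msnoc (MeasurableSet.univ_pi hs)]
    have hpre : (fun p : Cube (fun i : Fin k => d i.castSucc) × Blk d (Fin.last k) =>
          (Fin.snoc p.1 p.2 : Cube d)) ⁻¹' (Set.pi Set.univ s)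
        = (Set.pi Set.univ fun i : Fin k => s i.castSucc) ×ˢ s (Fin.last k) := by
      ext p
      simp only [Set.mem_preimage, Set.mem_pi, Set.mem_univ, true_implies, Set.mem_prod,
        Fin.forall_fin_succ', Fin.snoc_castSucc, Fin.snoc_last]
    rw [hpre, Measure.prod_prod, Measure.pi_pi]
    exact (Fin.prod_univ_castSucc fun i => ν i (s i)).symm
  have hcomp1 : (fun u : Cube d => fun i : Fin k => u i.castSucc) ∘
      (fun p : Cube (fun i : Fin k => d i.castSucc) × Blk d (Fin.last k) =>
        (Fin.snoc p.1 p.2 : Cube d)) = Prod.fst := by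
    funext p; funext i; exact Fin.snoc_castSucc _ _ _
  have hcomp2 : (fun u : Cube d => u (Fin.last k)) ∘
      (fun p : Cube (fun i : Fin k => d i.castSucc) × Blk d (Fin.last k) =>
        (Fin.snoc p.1 p.2 : Cube d)) = Prod.snd := by
    funext p; exact Fin.snoc_last _ _
  have hpifirst : (Measure.pi ν).map (fun u => fun i : Fin k => u i.castSucc)
      = Measure.pi (fun i : Fin k => ν i.castSucc) := by
    rw [hpi, Measure.map_map mfirst msnoc, hcomp1, Measure.map_fst_prod, measure_univ, one_smul]
  have hpilast : (Measure.pi ν).map (fun u => u (Fin.last k)) = ν (Fin.last k) := by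
    rw [hpi, Measure.map_map mlast msnoc, hcomp2, Measure.map_snd_prod, measure_univ, one_smul]
  -- key upper bound
  have key : ∀ γ1 : Measure (Cube (fun i : Fin k => d i.castSucc) ×
        Cube (fun i : Fin k => d i.castSucc)),
      (γ1.map Prod.fst = firstMarg d μt ∧
        γ1.map Prod.snd = Measure.pi (fun i : Fin k => ν i.castSucc)) →
      ∀ γ2 : Measure (Blk d (Fin.last k) × Blk d (Fin.last k)),
      (γ2.map Prod.fst = μt.map (fun u => u (Fin.last k)) ∧
        γ2.map Prod.snd = ν (Fin.last k)) →
      Wsq (jointCost d) μt (Measure.pi ν) ≤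
        (∫⁻ p, ENNReal.ofReal (jointCost (fun i : Fin k => d i.castSucc) p.1 p.2) ∂γ1) +
        (∫⁻ p, ENNReal.ofReal (blockCost d (Fin.last k) p.1 p.2) ∂γ2) := by
    intro γ1 h1 γ2 h2
    haveI : IsProbabilityMeasure γ1 := ⟨by
      rw [← Set.preimage_univ (f := Prod.fst),
        ← Measure.map_apply measurable_fst MeasurableSet.univ, h1.1]
      exact measure_univ⟩
    haveI : IsProbabilityMeasure γ2 := ⟨by
      rw [← Set.preimage_univ (f := Prod.fst),
        ← Measure.map_apply measurable_fst MeasurableSet.univ, h2.1]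
      exact measure_univ⟩
    have mG : Measurable (fun q :
        (Cube (fun i : Fin k => d i.castSucc) × Cube (fun i : Fin k => d i.castSucc)) ×
          (Blk d (Fin.last k) × Blk d (Fin.last k)) =>
        ((Fin.snoc q.1.1 q.2.1 : Cube d), (Fin.snoc q.1.2 q.2.2 : Cube d))) :=
      (msnoc.comp ((measurable_fst.comp measurable_fst).prodMk
          (measurable_fst.comp measurable_snd))).prodMk
        (msnoc.comp ((measurable_snd.comp measurable_fst).prodMk
          (measurable_snd.comp measurable_snd)))
    refine (Wsq_le _ ((γ1.prod γ2).map
      (fun q => ((Fin.snoc q.1.1 q.2.1 : Cube d), (Fin.snoc q.1.2 q.2.2 : Cube d))))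
      ⟨?_, ?_⟩).trans ?_
    · rw [Measure.map_map measurable_fst mG]
      have hc : (Prod.fst ∘ fun q :
          (Cube (fun i : Fin k => d i.castSucc) × Cube (fun i : Fin k => d i.castSucc)) ×
            (Blk d (Fin.last k) × Blk d (Fin.last k)) =>
          ((Fin.snoc q.1.1 q.2.1 : Cube d), (Fin.snoc q.1.2 q.2.2 : Cube d)))
          = (fun p => (Fin.snoc p.1 p.2 : Cube d)) ∘ Prod.map Prod.fst Prod.fst := rfl
      rw [hc, ← Measure.map_map msnoc (Measurable.prodMap measurable_fst measurable_fst),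
        ← Measure.map_prod_map _ _ measurable_fst measurable_fst, h1.1, h2.1]
      exact hind.symm
    · rw [Measure.map_map measurable_snd mG]
      have hc : (Prod.snd ∘ fun q :
          (Cube (fun i : Fin k => d i.castSucc) × Cube (fun i : Fin k => d i.castSucc)) ×
            (Blk d (Fin.last k) × Blk d (Fin.last k)) =>
          ((Fin.snoc q.1.1 q.2.1 : Cube d), (Fin.snoc q.1.2 q.2.2 : Cube d)))
          = (fun p => (Fin.snoc p.1 p.2 : Cube d)) ∘ Prod.map Prod.snd Prod.snd := rfl
      rw [hc, ← Measure.map_map msnoc (Measurable.prodMap measurable_snd measurable_snd),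
        ← Measure.map_prod_map _ _ measurable_snd measurable_snd, h1.2, h2.2]
      exact hpi.symm
    · refine le_of_eq ?_
      rw [lintegral_map ((measurable_jointCost d).ennreal_ofReal) mG]
      have hsplit : ∀ q :
          (Cube (fun i : Fin k => d i.castSucc) × Cube (fun i : Fin k => d i.castSucc)) ×
            (Blk d (Fin.last k) × Blk d (Fin.last k)),
          ENNReal.ofReal (jointCost d (Fin.snoc q.1.1 q.2.1) (Fin.snoc q.1.2 q.2.2)) =
            ENNReal.ofReal (jointCost (fun i : Fin k => d i.castSucc) q.1.1 q.1.2) +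
              ENNReal.ofReal (blockCost d (Fin.last k) q.2.1 q.2.2) := by
        intro q
        rw [jointCost_split]
        simp only [Fin.snoc_castSucc, Fin.snoc_last]
        exact ENNReal.ofReal_add (jointCost_nonneg _ _ _) (blockCost_nonneg _ _ _ _)
      calc ∫⁻ q, ENNReal.ofReal (jointCost d (Fin.snoc q.1.1 q.2.1) (Fin.snoc q.1.2 q.2.2))
              ∂(γ1.prod γ2)
          = ∫⁻ q, (ENNReal.ofReal (jointCost (fun i : Fin k => d i.castSucc) q.1.1 q.1.2) +
              ENNReal.ofReal (blockCost d (Fin.last k) q.2.1 q.2.2)) ∂(γ1.prod γ2) :=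
            lintegral_congr hsplit
        _ = (∫⁻ q, ENNReal.ofReal (jointCost (fun i : Fin k => d i.castSucc) q.1.1 q.1.2)
              ∂(γ1.prod γ2)) +
            ∫⁻ q, ENNReal.ofReal (blockCost d (Fin.last k) q.2.1 q.2.2) ∂(γ1.prod γ2) :=
            lintegral_add_left (ENNReal.measurable_ofReal.comp
              ((measurable_jointCost _).comp measurable_fst)) _
        _ = (∫⁻ p, ENNReal.ofReal (jointCost (fun i : Fin k => d i.castSucc) p.1 p.2) ∂γ1) +
            ∫⁻ p, ENNReal.ofReal (blockCost d (Fin.last k) p.1 p.2) ∂γ2 := by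
            rw [lintegral_fst_prod γ1 γ2
                ((measurable_jointCost _).ennreal_ofReal),
              lintegral_snd_prod γ1 γ2
                ((measurable_blockCost _ _).ennreal_ofReal)]
  -- main splitting identity
  have hW : Wsq (jointCost d) μt (Measure.pi ν) =
      Wsq (jointCost (fun i : Fin k => d i.castSucc)) (firstMarg d μt)
          (Measure.pi (fun i : Fin k => ν i.castSucc)) +
        Wsq (blockCost d (Fin.last k)) (μt.map (fun u => u (Fin.last k))) (ν (Fin.last k)) := by
    refine le_antisymm ?_ ?_
    · -- ≤ : combine couplings
      have e1 : Wsq (jointCost (fun i : Fin k => d i.castSucc)) (firstMarg d μt)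
            (Measure.pi (fun i : Fin k => ν i.castSucc)) +
          Wsq (blockCost d (Fin.last k)) (μt.map (fun u => u (Fin.last k))) (ν (Fin.last k))
          = ⨅ (γ1 : Measure (Cube (fun i : Fin k => d i.castSucc) ×
                Cube (fun i : Fin k => d i.castSucc)))
              (_ : γ1.map Prod.fst = firstMarg d μt ∧
                γ1.map Prod.snd = Measure.pi (fun i : Fin k => ν i.castSucc)),
              ((∫⁻ p, ENNReal.ofReal (jointCost (fun i : Fin k => d i.castSucc) p.1 p.2) ∂γ1) +
                Wsq (blockCost d (Fin.last k)) (μt.map (fun u => u (Fin.last k)))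
                  (ν (Fin.last k))) := by
        rw [show Wsq (jointCost (fun i : Fin k => d i.castSucc)) (firstMarg d μt)
            (Measure.pi (fun i : Fin k => ν i.castSucc)) =
            ⨅ (γ1 : Measure (Cube (fun i : Fin k => d i.castSucc) ×
                Cube (fun i : Fin k => d i.castSucc)))
              (_ : γ1.map Prod.fst = firstMarg d μt ∧
                γ1.map Prod.snd = Measure.pi (fun i : Fin k => ν i.castSucc)),
              ∫⁻ p, ENNReal.ofReal (jointCost (fun i : Fin k => d i.castSucc) p.1 p.2) ∂γ1
          from rfl, ENNReal.iInf_add]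
        exact iInf_congr fun γ1 => ENNReal.iInf_add
      rw [e1]
      refine le_iInf₂ fun γ1 h1 => ?_
      have e2 : (∫⁻ p, ENNReal.ofReal (jointCost (fun i : Fin k => d i.castSucc) p.1 p.2) ∂γ1) +
          Wsq (blockCost d (Fin.last k)) (μt.map (fun u => u (Fin.last k))) (ν (Fin.last k))
          = ⨅ (γ2 : Measure (Blk d (Fin.last k) × Blk d (Fin.last k)))
              (_ : γ2.map Prod.fst = μt.map (fun u => u (Fin.last k)) ∧
                γ2.map Prod.snd = ν (Fin.last k)),
              ((∫⁻ p, ENNReal.ofReal (jointCost (fun i : Fin k => d i.castSucc) p.1 p.2) ∂γ1) +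
                ∫⁻ p, ENNReal.ofReal (blockCost d (Fin.last k) p.1 p.2) ∂γ2) := by
        rw [show Wsq (blockCost d (Fin.last k)) (μt.map (fun u => u (Fin.last k)))
            (ν (Fin.last k)) =
            ⨅ (γ2 : Measure (Blk d (Fin.last k) × Blk d (Fin.last k)))
              (_ : γ2.map Prod.fst = μt.map (fun u => u (Fin.last k)) ∧
                γ2.map Prod.snd = ν (Fin.last k)),
              ∫⁻ p, ENNReal.ofReal (blockCost d (Fin.last k) p.1 p.2) ∂γ2 from rfl,
          ENNReal.add_iInf]
        exact iInf_congr fun γ2 => ENNReal.add_iInf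
      rw [e2]
      exact le_iInf₂ fun γ2 h2 => key γ1 h1 γ2 h2
    · -- ≥ : project couplings
      refine le_iInf₂ fun γ hγ => ?_
      have mF : Measurable (fun p : Cube d × Cube d =>
          ((fun i : Fin k => p.1 i.castSucc), (fun i : Fin k => p.2 i.castSucc))) :=
        (mfirst.comp measurable_fst).prodMk (mfirst.comp measurable_snd)
      have mL : Measurable (fun p : Cube d × Cube d => (p.1 (Fin.last k), p.2 (Fin.last k))) :=
        (mlast.comp measurable_fst).prodMk (mlast.comp measurable_snd)
      have h1a : (γ.map (fun p : Cube d × Cube d =>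
          ((fun i : Fin k => p.1 i.castSucc), (fun i : Fin k => p.2 i.castSucc)))).map Prod.fst
          = firstMarg d μt := by
        rw [Measure.map_map measurable_fst mF]
        have hc : (Prod.fst ∘ (fun p : Cube d × Cube d =>
            ((fun i : Fin k => p.1 i.castSucc), (fun i : Fin k => p.2 i.castSucc))))
            = (fun u : Cube d => fun i : Fin k => u i.castSucc) ∘ Prod.fst := rfl
        rw [hc, ← Measure.map_map mfirst measurable_fst, hγ.1]
        rfl
      have h1b : (γ.map (fun p : Cube d × Cube d =>
          ((fun i : Fin k => p.1 i.castSucc), (fun i : Fin k => p.2 i.castSucc)))).map Prod.snd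
          = Measure.pi (fun i : Fin k => ν i.castSucc) := by
        rw [Measure.map_map measurable_snd mF]
        have hc : (Prod.snd ∘ (fun p : Cube d × Cube d =>
            ((fun i : Fin k => p.1 i.castSucc), (fun i : Fin k => p.2 i.castSucc))))
            = (fun u : Cube d => fun i : Fin k => u i.castSucc) ∘ Prod.snd := rfl
        rw [hc, ← Measure.map_map mfirst measurable_snd, hγ.2]
        exact hpifirst
      have h2a : (γ.map (fun p : Cube d × Cube d =>
          (p.1 (Fin.last k), p.2 (Fin.last k)))).map Prod.fst
          = μt.map (fun u => u (Fin.last k)) := by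
        rw [Measure.map_map measurable_fst mL]
        have hc : (Prod.fst ∘ (fun p : Cube d × Cube d => (p.1 (Fin.last k), p.2 (Fin.last k))))
            = (fun u : Cube d => u (Fin.last k)) ∘ Prod.fst := rfl
        rw [hc, ← Measure.map_map mlast measurable_fst, hγ.1]
      have h2b : (γ.map (fun p : Cube d × Cube d =>
          (p.1 (Fin.last k), p.2 (Fin.last k)))).map Prod.snd = ν (Fin.last k) := by
        rw [Measure.map_map measurable_snd mL]
        have hc : (Prod.snd ∘ (fun p : Cube d × Cube d => (p.1 (Fin.last k), p.2 (Fin.last k))))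
            = (fun u : Cube d => u (Fin.last k)) ∘ Prod.snd := rfl
        rw [hc, ← Measure.map_map mlast measurable_snd, hγ.2]
        exact hpilast
      have hof1 : Measurable fun p : Cube (fun i : Fin k => d i.castSucc) ×
          Cube (fun i : Fin k => d i.castSucc) =>
          ENNReal.ofReal (jointCost (fun i : Fin k => d i.castSucc) p.1 p.2) :=
        (measurable_jointCost _).ennreal_ofReal
      have hof2 : Measurable fun p : Blk d (Fin.last k) × Blk d (Fin.last k) =>
          ENNReal.ofReal (blockCost d (Fin.last k) p.1 p.2) :=
        (measurable_blockCost _ _).ennreal_ofReal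
      have hmid : Measurable fun p : Cube d × Cube d =>
          ENNReal.ofReal (jointCost (fun i : Fin k => d i.castSucc)
            (fun i => p.1 i.castSucc) (fun i => p.2 i.castSucc)) := by
        apply Measurable.ennreal_ofReal
        unfold jointCost
        refine Finset.measurable_sum _ fun i _ => Finset.measurable_sum _ fun j _ => ?_
        exact (((measurable_pi_apply j).comp ((measurable_pi_apply i.castSucc).comp
            measurable_fst)).dist ((measurable_pi_apply j).comp
            ((measurable_pi_apply i.castSucc).comp measurable_snd))).pow_const 2
      have hm1 : ∫⁻ p, ENNReal.ofReal (jointCost (fun i : Fin k => d i.castSucc) p.1 p.2)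
          ∂(γ.map (fun p : Cube d × Cube d =>
            ((fun i : Fin k => p.1 i.castSucc), (fun i : Fin k => p.2 i.castSucc))))
          = ∫⁻ p, ENNReal.ofReal (jointCost (fun i : Fin k => d i.castSucc)
              (fun i => p.1 i.castSucc) (fun i => p.2 i.castSucc)) ∂γ :=
        lintegral_map hof1 mF
      have hm2 : ∫⁻ p, ENNReal.ofReal (blockCost d (Fin.last k) p.1 p.2)
          ∂(γ.map (fun p : Cube d × Cube d => (p.1 (Fin.last k), p.2 (Fin.last k))))
          = ∫⁻ p, ENNReal.ofReal (blockCost d (Fin.last k)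
              (p.1 (Fin.last k)) (p.2 (Fin.last k))) ∂γ :=
        lintegral_map hof2 mL
      calc Wsq (jointCost (fun i : Fin k => d i.castSucc)) (firstMarg d μt)
              (Measure.pi (fun i : Fin k => ν i.castSucc)) +
            Wsq (blockCost d (Fin.last k)) (μt.map (fun u => u (Fin.last k))) (ν (Fin.last k))
          ≤ (∫⁻ p, ENNReal.ofReal (jointCost (fun i : Fin k => d i.castSucc) p.1 p.2)
              ∂(γ.map (fun p : Cube d × Cube d =>
                ((fun i : Fin k => p.1 i.castSucc), (fun i : Fin k => p.2 i.castSucc))))) +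
            ∫⁻ p, ENNReal.ofReal (blockCost d (Fin.last k) p.1 p.2)
              ∂(γ.map (fun p : Cube d × Cube d => (p.1 (Fin.last k), p.2 (Fin.last k)))) :=
            add_le_add (Wsq_le _ _ ⟨h1a, h1b⟩) (Wsq_le _ _ ⟨h2a, h2b⟩)
        _ = ∫⁻ p, ENNReal.ofReal (jointCost d p.1 p.2) ∂γ := by
            rw [hm1, hm2, ← lintegral_add_left hmid]
            exact lintegral_congr fun p => by
              rw [jointCost_split d p.1 p.2,
                ENNReal.ofReal_add (jointCost_nonneg _ _ _) (blockCost_nonneg _ _ _ _)]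
  -- finiteness
  haveI : ∀ i : Fin k, IsProbabilityMeasure (ν i.castSucc) := fun i => inferInstance
  haveI : IsProbabilityMeasure (Measure.pi fun i : Fin k => ν i.castSucc) :=
    MeasureTheory.Measure.pi.instIsProbabilityMeasure _
  have hfin1 : Wsq (jointCost (fun i : Fin k => d i.castSucc)) (firstMarg d μt)
      (Measure.pi (fun i : Fin k => ν i.castSucc)) ≠ ⊤ :=
    Wsq_ne_top _ (fun a b => jointCost_le _ a b) _ _
  have hfin2 : Wsq (blockCost d (Fin.last k)) (μt.map (fun u => u (Fin.last k)))
      (ν (Fin.last k)) ≠ ⊤ :=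
    Wsq_ne_top _ (fun a b => blockCost_le d (Fin.last k) a b) _ _
  -- marginals agree
  have hmarg : ∀ i : Fin k,
      marg (fun i : Fin k => d i.castSucc) (firstMarg d μt) i = marg d μt i.castSucc := by
    intro i
    unfold marg firstMarg
    rw [Measure.map_map (measurable_pi_apply i) mfirst]
    rfl
  -- conclude
  unfold Tdep
  rw [hW, ENNReal.toReal_add hfin1 hfin2, Fin.sum_univ_castSucc]
  have hsum : ∑ i : Fin k,
      (Wsq (blockCost d i.castSucc) (marg d μt i.castSucc) (ν i.castSucc)).toReal
      = ∑ i : Fin k, (Wsq (blockCost (fun i : Fin k => d i.castSucc) i)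
          (marg (fun i : Fin k => d i.castSucc) (firstMarg d μt) i) (ν i.castSucc)).toReal := by
    refine Finset.sum_congr rfl fun i _ => ?_
    have hb : blockCost (fun i : Fin k => d i.castSucc) i = blockCost d i.castSucc := rfl
    rw [hmarg i, hb]
  have hlast : marg d μt (Fin.last k) = μt.map (fun u => u (Fin.last k)) := rfl
  rw [hsum, hlast]
  ring
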